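/- Let A^S ⊆ A and let B^S be the set of points of A^S on the boundary of vrs(A^S). Then vrs(B^S) = vrs(A^S). Consequently any point of A exterior to vrs(B^S) is exterior to vrs(A^S). -/

import Mathlib

open scoped Classical
open Finset
open scoped Pointwise

noncomputable section

/-- The VRS (free-disposal convex) hull of a finite set of points in ℝ^m. -/
def vrs {m : ℕ} (S : Finset (Fin m → ℝ)) : Set (Fin m → ℝ) :=
  {z | ∃ l : (Fin m → ℝ) → ℝ, (∀ a, 0 ≤ l a) ∧ (∑ a ∈ S, l a) = 1 ∧
    ∀ k, z k ≤ ∑ a ∈ S, l a * a k}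

/-- The frame of `A`: the points of `A` that are extreme points of `vrs A`. -/
def frame {m : ℕ} (A : Finset (Fin m → ℝ)) : Finset (Fin m → ℝ) :=
  A.filter fun a => a ∈ Set.extremePoints ℝ (vrs A)

lemma mem_vrs_of_le {m : ℕ} {S : Finset (Fin m → ℝ)} {z x : Fin m → ℝ}
    (hx : x ∈ vrs S) (h : ∀ k, z k ≤ x k) : z ∈ vrs S := by
  obtain ⟨l, hl0, hl1, hle⟩ := hx
  exact ⟨l, hl0, hl1, fun k => (h k).trans (hle k)⟩

lemma single_mem_vrs {m : ℕ} {S : Finset (Fin m → ℝ)} {a : Fin m → ℝ}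
    (ha : a ∈ S) : a ∈ vrs S := by
  refine ⟨fun b => if b = a then 1 else 0, fun b => by positivity, ?_, fun k => ?_⟩
  · simp [Finset.sum_ite_eq', ha]
  · simp [ite_mul, Finset.sum_ite_eq', ha]

lemma vrs_mono {m : ℕ} {S T : Finset (Fin m → ℝ)} (h : S ⊆ T) : vrs S ⊆ vrs T := by
  rintro z ⟨l, hl0, hl1, hle⟩
  refine ⟨fun a => if a ∈ S then l a else 0,
    fun a => by by_cases h' : a ∈ S <;> simp [h', hl0 a], ?_, fun k => ?_⟩
  · rw [← Finset.sum_subset h (fun x _ hx => by simp [hx])]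
    rw [← hl1]; exact Finset.sum_congr rfl fun x hx => by simp [hx]
  · rw [← Finset.sum_subset h (fun x _ hx => by simp [hx])]
    refine (hle k).trans (le_of_eq ?_)
    exact Finset.sum_congr rfl fun x hx => by simp [hx]

lemma vrs_convex {m : ℕ} (S : Finset (Fin m → ℝ)) : Convex ℝ (vrs S) := by
  rintro x ⟨lx, hx0, hx1, hxle⟩ y ⟨ly, hy0, hy1, hyle⟩ a b ha hb hab
  refine ⟨fun c => a * lx c + b * ly c,
    fun c => add_nonneg (mul_nonneg ha (hx0 c)) (mul_nonneg hb (hy0 c)), ?_, fun k => ?_⟩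
  · rw [Finset.sum_add_distrib, ← Finset.mul_sum, ← Finset.mul_sum, hx1, hy1]
    linarith
  · have h1 : a * x k ≤ a * ∑ c ∈ S, lx c * c k := by
      exact mul_le_mul_of_nonneg_left (hxle k) ha
    have h2 : b * y k ≤ b * ∑ c ∈ S, ly c * c k := by
      exact mul_le_mul_of_nonneg_left (hyle k) hb
    have : (a • x + b • y) k = a * x k + b * y k := rfl
    rw [this]
    calc a * x k + b * y k ≤ a * ∑ c ∈ S, lx c * c k + b * ∑ c ∈ S, ly c * c k := by linarith
    _ = ∑ c ∈ S, (a * lx c + b * ly c) * c k := by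
        rw [Finset.mul_sum, Finset.mul_sum, ← Finset.sum_add_distrib]
        exact Finset.sum_congr rfl fun c _ => by ring

lemma vrs_eq_add {m : ℕ} (S : Finset (Fin m → ℝ)) :
    vrs S = (convexHull ℝ (S : Set (Fin m → ℝ))) + {v : Fin m → ℝ | ∀ k, v k ≤ 0} := by
  ext z
  constructor
  · rintro ⟨l, hl0, hl1, hle⟩
    rw [Set.mem_add]
    refine ⟨∑ a ∈ S, l a • a, ?_, z - ∑ a ∈ S, l a • a, fun k => ?_, by abel⟩
    · have hcm : S.centerMass l id = ∑ a ∈ S, l a • a := by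
        rw [Finset.centerMass_eq_of_sum_1 S id hl1]
        simp
      rw [← hcm]
      exact Finset.centerMass_mem_convexHull S (fun i _ => hl0 i) (by rw [hl1]; norm_num)
        (fun i hi => by simpa using hi)
    · have : (∑ a ∈ S, l a • a) k = ∑ a ∈ S, l a * a k := by
        simp [Finset.sum_apply]
      simp only [Pi.sub_apply, this]
      linarith [hle k]
  · intro hz
    rw [Set.mem_add] at hz
    obtain ⟨w, hw, v, hv, rfl⟩ := hz
    rw [Finset.convexHull_eq] at hw
    obtain ⟨l, hl0, hl1, hlc⟩ := hw
    refine ⟨fun a => if a ∈ S then l a else 0, fun a => by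
      by_cases h : a ∈ S
      · simpa [h] using hl0 a h
      · simp [h], ?_, fun k => ?_⟩
    · rw [← hl1]; exact Finset.sum_congr rfl fun x hx => if_pos hx
    · have hwk : w k = ∑ a ∈ S, l a * a k := by
        rw [← hlc, Finset.centerMass_eq_of_sum_1 S id hl1]
        simp [Finset.sum_apply]
      have : ∑ a ∈ S, (if a ∈ S then l a else 0) * a k = ∑ a ∈ S, l a * a k :=
        Finset.sum_congr rfl fun x hx => by rw [if_pos hx]
      rw [this, ← hwk]
      have := hv k
      simp only [Pi.add_apply]
      linarith

lemma vrs_isClosed {m : ℕ} (S : Finset (Fin m → ℝ)) : IsClosed (vrs S) := by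
  rw [vrs_eq_add]
  refine IsClosed.add_left_of_isCompact ?_ ((Finset.finite_toSet S).isCompact_convexHull ℝ)
  have : {v : Fin m → ℝ | ∀ k, v k ≤ 0} = ⋂ k, {v : Fin m → ℝ | v k ≤ 0} := by
    ext v; simp
  rw [this]
  exact isClosed_iInter fun k => isClosed_le (continuous_apply k) continuous_const

lemma vrs_interior_nonempty {m : ℕ} {S : Finset (Fin m → ℝ)} {a : Fin m → ℝ}
    (ha : a ∈ S) : (interior (vrs S)).Nonempty := by
  refine ⟨a - 1, ?_⟩
  rw [mem_interior]
  refine ⟨Metric.ball (a - 1) (1/2), fun z hz => ?_, Metric.isOpen_ball,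
    Metric.mem_ball_self (by norm_num)⟩
  refine mem_vrs_of_le (single_mem_vrs ha) fun k => ?_
  have h1 : dist (z k) ((a - 1) k) ≤ dist z (a - 1) := dist_le_pi_dist z (a - 1) k
  have h2 : dist z (a - 1) < 1/2 := Metric.mem_ball.mp hz
  have hr : (a - 1 : Fin m → ℝ) k = a k - 1 := by simp
  rw [Real.dist_eq, hr] at h1
  have h3 := abs_lt.mp (lt_of_le_of_lt h1 h2)
  linarith [h3.2]

/-- Key lemma: every point of `S` lies in the vrs hull of the frontier points of `S`. -/
lemma mem_vrs_frontier {m : ℕ} (hm : 0 < m) {S : Finset (Fin m → ℝ)} {a : Fin m → ℝ}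
    (ha : a ∈ S) : a ∈ vrs (S.filter fun b => b ∈ frontier (vrs S)) := by
  classical
  set e : Fin m → ℝ := fun _ => 1 with he
  set T : Set ℝ := {t : ℝ | a + t • e ∈ vrs S} with hT
  have h0T : (0 : ℝ) ∈ T := by
    simp only [hT, Set.mem_setOf_eq, zero_smul, add_zero]
    exact single_mem_vrs ha
  have hTne : T.Nonempty := ⟨0, h0T⟩
  set k0 : Fin m := ⟨0, hm⟩ with hk0
  have hbdd : BddAbove T := by
    refine ⟨S.sup' ⟨a, ha⟩ (fun b => b k0) - a k0, fun t ht => ?_⟩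
    obtain ⟨l, hl0, hl1, hle⟩ := ht
    have h1 : a k0 + t ≤ ∑ b ∈ S, l b * b k0 := by
      have h := hle k0
      have he2 : (a + t • e) k0 = a k0 + t := by simp [he]
      rw [he2] at h
      exact h
    have h2 : ∑ b ∈ S, l b * b k0 ≤ S.sup' ⟨a, ha⟩ (fun b => b k0) := by
      calc ∑ b ∈ S, l b * b k0 ≤ ∑ b ∈ S, l b * S.sup' ⟨a, ha⟩ (fun b => b k0) := by
            refine Finset.sum_le_sum fun b hb => ?_
            exact mul_le_mul_of_nonneg_left (Finset.le_sup' (fun b => b k0) hb) (hl0 b)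
        _ = S.sup' ⟨a, ha⟩ (fun b => b k0) := by rw [← Finset.sum_mul, hl1, one_mul]
    linarith
  have hTclosed : IsClosed T := by
    have : T = (fun t : ℝ => a + t • e) ⁻¹' vrs S := rfl
    rw [this]
    exact (vrs_isClosed S).preimage (continuous_const.add (continuous_id.smul continuous_const))
  set ts : ℝ := sSup T with hts
  have htsT : ts ∈ T := hTclosed.csSup_mem hTne hbdd
  have hts0 : 0 ≤ ts := le_csSup hbdd h0T
  set x : Fin m → ℝ := a + ts • e with hx
  have hxvrs : x ∈ vrs S := htsT
  have hxni : x ∉ interior (vrs S) := by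
    intro hxint
    rw [mem_interior_iff_mem_nhds, Metric.mem_nhds_iff] at hxint
    obtain ⟨ε, hε, hball⟩ := hxint
    have hmem : x + (ε/2) • e ∈ vrs S := by
      apply hball
      rw [Metric.mem_ball, dist_eq_norm]
      have : x + (ε/2) • e - x = (ε/2) • e := by abel
      rw [this]
      have hne : ‖(ε/2) • e‖ ≤ ε/2 := by
        rw [norm_smul]
        have : ‖e‖ ≤ 1 := by
          rw [pi_norm_le_iff_of_nonneg (by norm_num : (0:ℝ) ≤ 1)]
          intro i; simp [he]
        have h2 : ‖(ε/2 : ℝ)‖ = ε/2 := by rw [Real.norm_eq_abs, abs_of_pos (by linarith)]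
        calc ‖(ε/2 : ℝ)‖ * ‖e‖ ≤ ‖(ε/2 : ℝ)‖ * 1 := by
              exact mul_le_mul_of_nonneg_left this (norm_nonneg _)
          _ = ε/2 := by rw [mul_one, h2]
      linarith
    have : ts + ε/2 ∈ T := by
      have heq : a + (ts + ε/2) • e = x + (ε/2) • e := by
        rw [hx, add_smul]; abel
      show a + (ts + ε/2) • e ∈ vrs S
      rw [heq]; exact hmem
    have := le_csSup hbdd this
    linarith
  obtain ⟨c, hc⟩ := vrs_interior_nonempty ha
  obtain ⟨f, hf⟩ := geometric_hahn_banach_open_point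
    ((vrs_convex S).interior) isOpen_interior hxni
  -- every point of vrs S has f ≤ f x
  have hfle : ∀ y ∈ vrs S, f y ≤ f x := by
    intro y hy
    have hlim : Filter.Tendsto (fun t : ℝ => t * f c + (1 - t) * f y)
        (nhdsWithin 0 (Set.Ioi 0)) (nhds (f y)) := by
      have hcont : Continuous (fun t : ℝ => t * f c + (1 - t) * f y) := by
        continuity
      have := hcont.tendsto 0
      simp only [zero_mul, sub_zero, one_mul, zero_add] at this
      exact this.mono_left nhdsWithin_le_nhds
    refine le_of_tendsto hlim ?_
    filter_upwards [Ioo_mem_nhdsGT_of_mem (Set.mem_Ico.mpr ⟨le_refl (0:ℝ), zero_lt_one⟩)]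
      with t ht
    have hmem : t • c + (1 - t) • y ∈ interior (vrs S) :=
      (vrs_convex S).combo_interior_closure_mem_interior hc (subset_closure hy)
        ht.1 (by linarith [ht.2]) (by ring)
    have := hf _ hmem
    simpa [map_add, map_smul, smul_eq_mul] using this.le
  -- f is nonnegative on nonnegative vectors
  have hfpos : ∀ v : Fin m → ℝ, (∀ k, 0 ≤ v k) → 0 ≤ f v := by
    intro v hv
    have hmem : x - v ∈ vrs S := by
      refine mem_vrs_of_le hxvrs fun k => ?_
      have := hv k
      simp only [Pi.sub_apply]
      linarith
    have := hfle _ hmem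
    rw [map_sub] at this
    linarith
  obtain ⟨l, hl0, hl1, hle⟩ := hxvrs
  set w : Fin m → ℝ := fun k => ∑ b ∈ S, l b * b k with hw
  have hwvrs : w ∈ vrs S := ⟨l, hl0, hl1, fun k => le_refl _⟩
  have hxw : f x ≤ f w := by
    have h1 : 0 ≤ f (w - x) := hfpos _ fun k => by
      have := hle k; simp only [Pi.sub_apply, hw]; linarith
    rw [map_sub] at h1; linarith
  have hwx : f w = f x := le_antisymm (hfle _ hwvrs) hxw
  have hwsum : w = ∑ b ∈ S, l b • b := by
    funext k; simp [hw, Finset.sum_apply]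
  have hfw : f w = ∑ b ∈ S, l b * f b := by
    rw [hwsum, map_sum]
    exact Finset.sum_congr rfl fun b _ => by rw [map_smul, smul_eq_mul]
  -- every b with l b ≠ 0 achieves the max, hence is on the frontier
  have hmax : ∀ b ∈ S, l b ≠ 0 → f b = f x := by
    intro b hb hlb
    by_contra hne
    have hblt : f b < f x := lt_of_le_of_ne (hfle b (single_mem_vrs hb)) hne
    have hlbpos : 0 < l b := lt_of_le_of_ne (hl0 b) (Ne.symm hlb)
    have : ∑ c ∈ S, l c * f c < ∑ c ∈ S, l c * f x := by
      refine Finset.sum_lt_sum (fun c hc => ?_) ⟨b, hb, ?_⟩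
      · exact mul_le_mul_of_nonneg_left (hfle c (single_mem_vrs hc)) (hl0 c)
      · exact mul_lt_mul_of_pos_left hblt hlbpos
    rw [← Finset.sum_mul, hl1, one_mul, ← hfw, hwx] at this
    exact lt_irrefl _ this
  have hfrontier : ∀ b ∈ S, l b ≠ 0 → b ∈ S.filter fun c => c ∈ frontier (vrs S) := by
    intro b hb hlb
    rw [Finset.mem_filter]
    refine ⟨hb, ?_⟩
    rw [(vrs_isClosed S).frontier_eq]
    refine ⟨single_mem_vrs hb, fun hbint => ?_⟩
    have := hf b hbint
    rw [hmax b hb hlb] at this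
    exact lt_irrefl _ this
  -- conclude: a ≤ x ≤ w which is a combination of frontier points
  have hzero : ∀ b ∈ S, b ∉ (S.filter fun c => c ∈ frontier (vrs S)) → l b = 0 := by
    intro b hb hnb
    by_contra h
    exact hnb (hfrontier b hb h)
  refine ⟨l, hl0, ?_, fun k => ?_⟩
  · rw [← hl1]
    exact Finset.sum_subset (Finset.filter_subset _ _) hzero
  · have h1 : a k ≤ x k := by
      have : x k = a k + ts * 1 := rfl
      rw [this]; linarith
    have h2 := hle k
    have h3 : ∑ b ∈ (S.filter fun c => c ∈ frontier (vrs S)), l b * b k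
        = ∑ b ∈ S, l b * b k :=
      Finset.sum_subset (Finset.filter_subset _ _)
        (fun b hb hnb => by rw [hzero b hb hnb, zero_mul])
    rw [h3]
    linarith

theorem stmt12 {m : ℕ} (hm : 0 < m) (A AS : Finset (Fin m → ℝ)) (hAS : AS ⊆ A) :
    vrs (AS.filter fun a => a ∈ frontier (vrs AS)) = vrs AS ∧
    ∀ b ∈ A, b ∉ vrs (AS.filter fun a => a ∈ frontier (vrs AS)) → b ∉ vrs AS := by
  have hmain : vrs (AS.filter fun a => a ∈ frontier (vrs AS)) = vrs AS := by
    apply Set.Subset.antisymm (vrs_mono (Finset.filter_subset _ _))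
    rintro z ⟨l, hl0, hl1, hle⟩
    set BS := AS.filter fun a => a ∈ frontier (vrs AS) with hBS
    -- choice of decompositions
    have hkey : ∀ a ∈ AS, a ∈ vrs BS := fun a ha => mem_vrs_frontier hm ha
    choose! g hg0 hg1 hgle using hkey
    refine ⟨fun b => ∑ a ∈ AS, l a * g a b, fun b => ?_, ?_, fun k => ?_⟩
    · refine Finset.sum_nonneg fun a ha => mul_nonneg (hl0 a) (hg0 a ha b)
    · rw [Finset.sum_comm]
      calc ∑ a ∈ AS, ∑ b ∈ BS, l a * g a b
          = ∑ a ∈ AS, l a * ∑ b ∈ BS, g a b := by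
            exact Finset.sum_congr rfl fun a _ => (Finset.mul_sum _ _ _).symm
        _ = ∑ a ∈ AS, l a := by
            refine Finset.sum_congr rfl fun a ha => by rw [hg1 a ha, mul_one]
        _ = 1 := hl1
    · have h1 : ∀ a ∈ AS, l a * a k ≤ l a * ∑ b ∈ BS, g a b * b k := fun a ha =>
        mul_le_mul_of_nonneg_left (hgle a ha k) (hl0 a)
      calc z k ≤ ∑ a ∈ AS, l a * a k := hle k
        _ ≤ ∑ a ∈ AS, l a * ∑ b ∈ BS, g a b * b k := Finset.sum_le_sum h1
        _ = ∑ b ∈ BS, (∑ a ∈ AS, l a * g a b) * b k := by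
            have e1 : ∀ a ∈ AS, l a * ∑ b ∈ BS, g a b * b k
                = ∑ b ∈ BS, l a * (g a b * b k) := fun a _ => Finset.mul_sum _ _ _
            rw [Finset.sum_congr rfl e1, Finset.sum_comm]
            refine Finset.sum_congr rfl fun b _ => ?_
            rw [Finset.sum_mul]
            exact Finset.sum_congr rfl fun a _ => by ring
  exact ⟨hmain, fun b _ hb => by rwa [hmain] at hb⟩
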